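/- If η < (κ Φ_max^{1-θ})^{-1}, then the flat-pricing revenue R(p) is unimodal on [0, Φ_max^θ): R' has exactly one sign change, from positive to negative, at a unique critical point p̂ ∈ (0, p̄) where p̄ = ((1+θ−σ)/(ηκ(2−θ−σ)))^{θ/(1-θ)}. -/

import Mathlib

/-- If η < (κ Φ_max^{1-θ})⁻¹, the flat-pricing revenue is unimodal on
[0, Φ_max^θ): its derivative R' has a unique root p̂ ∈ (0, p̄), is positive
below p̂ and negative above p̂. -/
theorem flat_pricing_revenue_unimodal
    (θ σ Φmax Z N κ η : ℝ)
    (hθ0 : 0 < θ) (hθ1 : θ < 1) (hσ0 : 0 < σ) (hσ1 : σ < 1)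
    (hΦ : 0 < Φmax) (hZ : Z = Φmax ^ (1 - σ) / (1 - σ))
    (hN : 0 < N) (hκ0 : 0 < κ) (hκ1 : κ ≤ 1) (hη : 0 < η)
    (hcost : η < (κ * Φmax ^ (1 - θ))⁻¹)
    (R' : ℝ → ℝ)
    (hR' : ∀ p : ℝ, R' p =
      N * (1 - (1 + (1 - σ) / θ) * p ^ ((1 - σ) / θ) / (Z * (1 - σ))
        + η * κ * p ^ ((2 - σ) / θ - 1) / (Z * θ))) :
    ∃ phat ∈ Set.Ioo (0:ℝ) (((1 + θ - σ) / (η * κ * (2 - θ - σ))) ^ (θ / (1 - θ))),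
      R' phat = 0 ∧
      (∀ p ∈ Set.Ioo (0:ℝ) phat, 0 < R' p) ∧
      (∀ p ∈ Set.Ioo phat (Φmax ^ θ), R' p < 0) ∧
      (∀ p ∈ Set.Ioo (0:ℝ) (Φmax ^ θ), R' p = 0 → p = phat) := by
  have h1σ : (0:ℝ) < 1 - σ := by linarith
  have h1θ : (0:ℝ) < 1 - θ := by linarith
  have hW0 : (0:ℝ) < Φmax ^ (1 - σ) := Real.rpow_pos_of_pos hΦ _
  have hV0 : (0:ℝ) < Φmax ^ (1 - θ) := Real.rpow_pos_of_pos hΦ _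
  have hZ0 : 0 < Z := by rw [hZ]; positivity
  set a := (1 - σ) / θ with ha_def
  set b := (2 - σ) / θ - 1 with hb_def
  set c := (1 - θ) / θ with hc_def
  have ha0 : 0 < a := div_pos h1σ hθ0
  have hb0 : 0 < b := by
    rw [hb_def, sub_pos, lt_div_iff₀ hθ0]; linarith
  have hc0 : 0 < c := div_pos h1θ hθ0
  have hbac : b = a + c := by
    rw [hb_def, ha_def, hc_def]; field_simp; ring
  set A := (1 + a) / (Z * (1 - σ)) with hA_def
  set B := η * κ / (Z * θ) with hB_def
  have hA0 : 0 < A := by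
    apply div_pos (by linarith) (by positivity)
  have hB0 : 0 < B := by
    apply div_pos (by positivity) (by positivity)
  set K := (1 + θ - σ) / (η * κ * (2 - θ - σ)) with hK_def
  have h2θσ : (0:ℝ) < 2 - θ - σ := by linarith
  have h1θσ : (0:ℝ) < 1 + θ - σ := by linarith
  have hK0 : 0 < K := div_pos h1θσ (by positivity)
  set Pb := K ^ (θ / (1 - θ)) with hPb_def
  have hPb0 : 0 < Pb := Real.rpow_pos_of_pos hK0 _
  have hPbc : Pb ^ c = K := by
    have h1 : θ / (1 - θ) * c = 1 := by rw [hc_def]; field_simp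
    rw [hPb_def, ← Real.rpow_mul hK0.le, h1, Real.rpow_one]
  have hKey : a * A = b * B * K := by
    rw [hA_def, hB_def, hK_def, ha_def, hb_def]
    field_simp
    ring
  set g : ℝ → ℝ := fun p => 1 - A * p ^ a + B * p ^ b with hg_def
  have hRg : ∀ p, R' p = N * g p := by
    intro p
    rw [hR' p, hg_def]
    simp only
    rw [hA_def, hB_def]
    field_simp
  have hgcont : Continuous g := by
    rw [hg_def]
    apply Continuous.add
    · exact continuous_const.sub
        (continuous_const.mul (continuous_id.rpow_const fun x => Or.inr ha0.le))
    · exact continuous_const.mul (continuous_id.rpow_const fun x => Or.inr hb0.le)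
  have hderiv : ∀ p : ℝ, 0 < p →
      HasDerivAt g (p ^ (a - 1) * (b * B * p ^ c - a * A)) p := by
    intro p hp
    have h1 : HasDerivAt (fun x : ℝ => x ^ a) (a * p ^ (a - 1)) p :=
      Real.hasDerivAt_rpow_const (Or.inl hp.ne')
    have h2 : HasDerivAt (fun x : ℝ => x ^ b) (b * p ^ (b - 1)) p :=
      Real.hasDerivAt_rpow_const (Or.inl hp.ne')
    have h3 := ((hasDerivAt_const p (1:ℝ)).sub (h1.const_mul A)).add (h2.const_mul B)
    refine h3.congr_deriv ?_
    have hpb1 : p ^ (b - 1) = p ^ (a - 1) * p ^ c := by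
      rw [← Real.rpow_add hp, hbac]; ring_nf
    rw [hpb1]; ring
  have hderiv_eq : ∀ p : ℝ, 0 < p →
      deriv g p = p ^ (a - 1) * (b * B * p ^ c - a * A) := fun p hp =>
    (hderiv p hp).deriv
  -- strict antitone on [0, Pb]
  have hAnti : StrictAntiOn g (Set.Icc 0 Pb) := by
    apply strictAntiOn_of_deriv_neg (convex_Icc _ _) hgcont.continuousOn
    intro x hx
    rw [interior_Icc] at hx
    obtain ⟨hx0, hxPb⟩ := hx
    rw [hderiv_eq x hx0]
    apply mul_neg_of_pos_of_neg (Real.rpow_pos_of_pos hx0 _)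
    rw [sub_neg, hKey]
    have : x ^ c < K := by
      rw [← hPbc]
      exact Real.rpow_lt_rpow hx0.le hxPb hc0
    calc b * B * x ^ c < b * B * K := by
          apply mul_lt_mul_of_pos_left this (by positivity)
      _ = b * B * K := rfl
  -- strict monotone on [Pb, ∞)
  have hMono : StrictMonoOn g (Set.Ici Pb) := by
    apply strictMonoOn_of_deriv_pos (convex_Ici _) hgcont.continuousOn
    intro x hx
    rw [interior_Ici] at hx
    have hx0 : 0 < x := lt_trans hPb0 hx
    rw [hderiv_eq x hx0]
    apply mul_pos (Real.rpow_pos_of_pos hx0 _)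
    rw [sub_pos, hKey]
    have : K < x ^ c := by
      rw [← hPbc]
      exact Real.rpow_lt_rpow hPb0.le hx hc0
    exact mul_lt_mul_of_pos_left this (by positivity)
  have hg0 : g 0 = 1 := by
    rw [hg_def]; simp [Real.zero_rpow ha0.ne', Real.zero_rpow hb0.ne']
  set P := Φmax ^ θ with hP_def
  have hP0 : 0 < P := Real.rpow_pos_of_pos hΦ _
  -- value at P
  have hηκV : η * (κ * Φmax ^ (1 - θ)) < 1 := by
    have h := mul_lt_mul_of_pos_right hcost (by positivity : (0:ℝ) < κ * Φmax ^ (1 - θ))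
    rwa [inv_mul_cancel₀ (by positivity)] at h
  have hgP : g P < 0 := by
    have hPa : P ^ a = Φmax ^ (1 - σ) := by
      rw [hP_def, ← Real.rpow_mul hΦ.le, ha_def, mul_div_cancel₀ _ hθ0.ne']
    have hPb' : P ^ b = Φmax ^ (1 - σ) * Φmax ^ (1 - θ) / Φmax ^ θ * Φmax ^ θ := by
      rw [div_mul_cancel₀]
      · rw [hP_def, ← Real.rpow_mul hΦ.le, ← Real.rpow_add hΦ, hb_def]
        congr 1
        field_simp
        ring
      · exact (Real.rpow_pos_of_pos hΦ _).ne'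
    have hPb2 : P ^ b = Φmax ^ (1 - σ) * Φmax ^ (1 - θ) / Φmax ^ θ * Φmax ^ θ := hPb'
    have hPb3 : P ^ b = Φmax ^ (1 - σ + (1 - θ)) := by
      rw [hP_def, ← Real.rpow_mul hΦ.le, hb_def]
      congr 1
      field_simp
      ring
    rw [hg_def]
    simp only
    rw [hPa, hPb3, Real.rpow_add hΦ, hA_def, hB_def, hZ]
    have hWne : Φmax ^ (1 - σ) ≠ 0 := hW0.ne'
    have key : 1 - (1 + a) / (Φmax ^ (1 - σ) / (1 - σ) * (1 - σ)) * Φmax ^ (1 - σ) +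
        η * κ / (Φmax ^ (1 - σ) / (1 - σ) * θ) * (Φmax ^ (1 - σ) * Φmax ^ (1 - θ)) =
        (1 - σ) / θ * (η * (κ * Φmax ^ (1 - θ)) - 1) := by
      rw [ha_def]
      field_simp
      ring
    rw [key]
    apply mul_neg_of_pos_of_neg (by positivity)
    linarith
  -- q = min Pb P, g q < 0
  set q := min Pb P with hq_def
  have hq0 : 0 < q := lt_min hPb0 hP0
  have hgq : g q < 0 := by
    rcases le_or_gt Pb P with h | h
    · rw [hq_def, min_eq_left h]
      calc g Pb ≤ g P := hMono.monotoneOn (Set.self_mem_Ici) h (by exact h)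
        _ < 0 := hgP
    · rw [hq_def, min_eq_right h.le]; exact hgP
  -- IVT
  have hivt : (0:ℝ) ∈ g '' Set.Ioo 0 q := by
    apply intermediate_value_Ioo' hq0.le hgcont.continuousOn
    rw [hg0]
    exact ⟨hgq, one_pos⟩
  obtain ⟨phat, hphat_mem, hphat_eq⟩ := hivt
  obtain ⟨hphat0, hphatq⟩ := hphat_mem
  have hqPb : q ≤ Pb := min_le_left _ _
  have hqP : q ≤ P := min_le_right _ _
  have hphatPb : phat < Pb := lt_of_lt_of_le hphatq hqPb
  have hphatP : phat < P := lt_of_lt_of_le hphatq hqP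
  -- positivity below phat
  have hpos : ∀ p ∈ Set.Ioo (0:ℝ) phat, 0 < g p := by
    intro p hp
    have : g phat < g p := hAnti ⟨hp.1.le, (lt_trans hp.2 hphatPb).le⟩
      ⟨hphat0.le, hphatPb.le⟩ hp.2
    rw [hphat_eq] at this
    linarith
  -- negativity above phat (up to P)
  have hneg : ∀ p ∈ Set.Ioo phat P, g p < 0 := by
    intro p hp
    rcases le_or_gt p Pb with h | h
    · have : g p < g phat := hAnti ⟨hphat0.le, hphatPb.le⟩ ⟨(lt_trans hphat0 hp.1).le, h⟩ hp.1
      rw [hphat_eq] at this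
      linarith
    · have hPge : Pb < P := lt_trans h hp.2
      have : g p < g P := hMono (Set.mem_Ici.mpr h.le) (Set.mem_Ici.mpr hPge.le) hp.2
      linarith
  refine ⟨phat, ⟨hphat0, hphatPb⟩, ?_, ?_, ?_, ?_⟩
  · rw [hRg, hphat_eq, mul_zero]
  · intro p hp
    rw [hRg]
    exact mul_pos hN (hpos p hp)
  · intro p hp
    rw [hRg]
    exact mul_neg_of_pos_of_neg hN (hneg p hp)
  · intro p hp hp0
    have hgp : g p = 0 := by
      have h : N * g p = 0 := by rw [← hRg p, hp0]
      exact (mul_eq_zero.mp h).resolve_left hN.ne'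
    rcases lt_trichotomy p phat with h | h | h
    · exact absurd hgp (ne_of_gt (hpos p ⟨hp.1, h⟩))
    · exact h
    · exact absurd hgp (ne_of_lt (hneg p ⟨h, hp.2⟩))
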